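/- Let N ≥ 2, ω = exp(2πi/N), and let Z: Z_N × Z_N → ℂ. Define the orbifold Z'[b₁,b₂] = (1/N)·Σ_{a₁,a₂ ∈ Z_N} ω^(a₁b₂ - a₂b₁)·Z[a₁,a₂], and the parafermionization PF(W)[ρ₁,ρ₂] = (1/N)·Σ_{a₁,a₂} ω^((ρ₁+a₁)(ρ₂+a₂))·W[a₁,a₂]. Then PF(Z')[ρ₁,ρ₂] = ω^(ρ₁ρ₂)·PF(Z)[ρ₁,-ρ₂] for all ρ₁, ρ₂ ∈ Z_N. -/

import Mathlib

open Finset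

/-- parafermionizing the Z_N orbifold equals the charge-conjugated
parafermionization stacked with the Arf_N phase `ω^(ρ₁ρ₂)`. -/
theorem stmt_5 (N : ℕ) [NeZero N] (hN : 2 ≤ N) (ω : ℂ)
    (hω : ω = Complex.exp (2 * Real.pi * Complex.I / N))
    (Z Z' : ZMod N → ZMod N → ℂ)
    (hZ' : ∀ b₁ b₂ : ZMod N, Z' b₁ b₂ = (1 / N) * ∑ a₁ : ZMod N, ∑ a₂ : ZMod N,
      ω ^ (a₁ * b₂ - a₂ * b₁).val * Z a₁ a₂)
    (PF : (ZMod N → ZMod N → ℂ) → ZMod N → ZMod N → ℂ)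
    (hPF : ∀ (W : ZMod N → ZMod N → ℂ) (ρ₁ ρ₂ : ZMod N),
      PF W ρ₁ ρ₂ = (1 / N) * ∑ a₁ : ZMod N, ∑ a₂ : ZMod N,
        ω ^ ((ρ₁ + a₁) * (ρ₂ + a₂)).val * W a₁ a₂) :
    ∀ ρ₁ ρ₂ : ZMod N, PF Z' ρ₁ ρ₂ = ω ^ (ρ₁ * ρ₂).val * PF Z ρ₁ (-ρ₂) := by
  intro ρ₁ ρ₂
  have hNC : (N : ℂ) ≠ 0 := Nat.cast_ne_zero.mpr (NeZero.ne N)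
  have hprim : IsPrimitiveRoot ω N := hω ▸ Complex.isPrimitiveRoot_exp N (NeZero.ne N)
  have hω1 : ω ^ N = 1 := hprim.pow_eq_one
  set ψ : AddChar (ZMod N) ℂ := AddChar.zmodChar N hω1 with hψdef
  have hψ : ∀ a : ZMod N, ω ^ a.val = ψ a := fun a => (AddChar.zmodChar_apply hω1 a).symm
  have hψprim : ψ.IsPrimitive := AddChar.zmodChar_primitive_of_primitive_root N hprim
  have hsum : ∀ d : ZMod N, ∑ x : ZMod N, ψ (x * d) = if d = 0 then (N : ℂ) else 0 := by
    intro d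
    have := AddChar.sum_mulShift (ψ := ψ) d hψprim
    simpa [ZMod.card] using this
  -- key collapse
  have key : ∀ b₁ b₂ : ZMod N,
      ∑ a₁ : ZMod N, ∑ a₂ : ZMod N,
        ψ ((ρ₁ + a₁) * (ρ₂ + a₂) + (b₁ * a₂ - b₂ * a₁))
      = (N : ℂ) * (ψ (ρ₁ * ρ₂) * ψ ((ρ₁ + b₁) * (-ρ₂ + b₂))) := by
    intro b₁ b₂
    rw [Finset.sum_comm]
    have step1 : ∀ a₂ : ZMod N,
        ∑ a₁ : ZMod N, ψ ((ρ₁ + a₁) * (ρ₂ + a₂) + (b₁ * a₂ - b₂ * a₁))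
        = ψ (ρ₁ * (ρ₂ + a₂) + b₁ * a₂) * (if ρ₂ + a₂ - b₂ = 0 then (N : ℂ) else 0) := by
      intro a₂
      rw [← hsum (ρ₂ + a₂ - b₂), Finset.mul_sum]
      refine Finset.sum_congr rfl fun a₁ _ => ?_
      rw [← AddChar.map_add_eq_mul]
      congr 1
      ring
    simp_rw [step1]
    rw [Finset.sum_eq_single (b₂ - ρ₂)]
    · have : ρ₂ + (b₂ - ρ₂) - b₂ = 0 := by ring
      rw [this, if_pos rfl, ← AddChar.map_add_eq_mul, mul_comm]
      congr 2
      ring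
    · intro c _ hc
      have : ρ₂ + c - b₂ ≠ 0 := fun h => hc (by linear_combination h)
      rw [if_neg this, mul_zero]
    · intro h
      exact absurd (Finset.mem_univ _) h
  -- main computation
  rw [hPF, hPF]
  simp_rw [hZ', hψ]
  have L1 : ∀ x₁ x₂ : ZMod N,
      ψ ((ρ₁ + x₁) * (ρ₂ + x₂)) * ((1 / (N:ℂ)) * ∑ b₁ : ZMod N, ∑ b₂ : ZMod N,
        ψ (b₁ * x₂ - b₂ * x₁) * Z b₁ b₂)
      = (1 / (N:ℂ)) * ∑ y : ZMod N × ZMod N,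
          ψ ((ρ₁ + x₁) * (ρ₂ + x₂) + (y.1 * x₂ - y.2 * x₁)) * Z y.1 y.2 := by
    intro x₁ x₂
    rw [mul_left_comm, Fintype.sum_prod_type, Finset.mul_sum]
    congr 1
    refine Finset.sum_congr rfl fun b₁ _ => ?_
    rw [Finset.mul_sum]
    refine Finset.sum_congr rfl fun b₂ _ => ?_
    rw [AddChar.map_add_eq_mul, mul_assoc]
  rw [Finset.sum_congr rfl fun x _ => Finset.sum_congr rfl fun x₂ _ => L1 x x₂]
  simp_rw [← Finset.mul_sum]
  rw [← mul_assoc, Finset.sum_congr rfl fun x _ => Finset.sum_comm, Finset.sum_comm]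
  have L2 : ∀ y : ZMod N × ZMod N,
      ∑ x : ZMod N, ∑ x₂ : ZMod N,
        ψ ((ρ₁ + x) * (ρ₂ + x₂) + (y.1 * x₂ - y.2 * x)) * Z y.1 y.2
      = ((N : ℂ) * (ψ (ρ₁ * ρ₂) * ψ ((ρ₁ + y.1) * (-ρ₂ + y.2)))) * Z y.1 y.2 := by
    intro y
    simp_rw [← Finset.sum_mul]
    rw [key y.1 y.2]
  rw [Finset.sum_congr rfl fun y _ => L2 y]
  rw [show ∀ c : ℂ, (1/(N:ℂ)) * (1/(N:ℂ)) * c = c * (1/(N:ℂ)) * (1/(N:ℂ)) from fun c => by ring]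
  rw [show (∑ x : ZMod N, ∑ x₁ : ZMod N, ψ ((ρ₁ + x) * (-ρ₂ + x₁)) * Z x x₁)
      = ∑ y : ZMod N × ZMod N, ψ ((ρ₁ + y.1) * (-ρ₂ + y.2)) * Z y.1 y.2 from
    (Fintype.sum_prod_type (f := fun y => ψ ((ρ₁ + y.1) * (-ρ₂ + y.2)) * Z y.1 y.2)).symm]
  simp_rw [Finset.sum_mul, Finset.mul_sum]
  refine Finset.sum_congr rfl fun y _ => ?_
  field_simp
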